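/- For a connected unweighted graph with n vertices and any edge e, B_e^2 \leq n. -/

import Mathlib

open Matrix BigOperators

/-- Maximum principle: if `L *ᵥ x = 1_s - 1_t` for the graph Laplacian of a
connected graph, then `x` attains its maximum at `s`. -/
lemma biharm_maxAux {V E : Type*} [Fintype V] [DecidableEq V] [Fintype E]
    (vsrc vtgt : E → V) (hsimple : ∀ e, vsrc e ≠ vtgt e)
    (Bd : Matrix V E ℝ)
    (hBd : Bd = fun v e => (if v = vsrc e then (1:ℝ) else 0) - (if v = vtgt e then 1 else 0))
    (L : Matrix V V ℝ) (hLdef : L = Bd * Bdᵀ)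
    (hconn : ∀ x : V → ℝ, L *ᵥ x = 0 → ∃ c : ℝ, x = Function.const V c)
    (s t : V) (hst : s ≠ t) (x : V → ℝ)
    (hx : L *ᵥ x = Pi.single s 1 - Pi.single t 1) :
    ∀ v, x v ≤ x s := by
  have hBdT : ∀ (y : V → ℝ) (e : E), (Bdᵀ *ᵥ y) e = y (vsrc e) - y (vtgt e) := by
    intro y e
    simp only [hBd, mulVec, dotProduct, Matrix.transpose, Matrix.of_apply, transpose_apply, sub_mul, ite_mul, one_mul, zero_mul,
      Finset.sum_sub_distrib, Finset.sum_ite_eq', Finset.mem_univ, if_pos]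
  have hLx : ∀ (y : V → ℝ) (v : V), (L *ᵥ y) v = ∑ e, Bd v e * (y (vsrc e) - y (vtgt e)) := by
    intro y v
    rw [hLdef, ← mulVec_mulVec]
    have h0 : (Bd *ᵥ (Bdᵀ *ᵥ y)) v = ∑ e, Bd v e * (Bdᵀ *ᵥ y) e := rfl
    rw [h0]
    exact Finset.sum_congr rfl fun e _ => by rw [hBdT]
  by_contra hcon
  push_neg at hcon
  obtain ⟨w, hw⟩ := hcon
  have hne : Nonempty V := ⟨s⟩
  obtain ⟨v₀, hv₀⟩ := Finite.exists_max x
  have hMs : x s < x v₀ := lt_of_lt_of_le hw (hv₀ w)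
  have key : ∀ v, x v₀ ≤ x v → ∀ e, Bd v e * (x (vsrc e) - x (vtgt e)) = 0 := by
    intro v hv
    have hvmax : ∀ u, x u ≤ x v := fun u => (hv₀ u).trans hv
    have hvs : v ≠ s := by rintro rfl; exact absurd hv (not_le.2 hMs)
    have hterm : ∀ e, 0 ≤ Bd v e * (x (vsrc e) - x (vtgt e)) := by
      intro e
      rcases eq_or_ne v (vsrc e) with h1 | h1
      · have h2 : v ≠ vtgt e := h1 ▸ hsimple e
        rw [hBd]
        simp only [if_pos h1, if_neg h2, sub_zero, one_mul]
        rw [← h1]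
        linarith [hvmax (vtgt e)]
      · rcases eq_or_ne v (vtgt e) with h2 | h2
        · rw [hBd]
          simp only [if_neg h1, if_pos h2]
          have h3 : x (vsrc e) ≤ x (vtgt e) := by rw [← h2]; exact hvmax _
          nlinarith [h3]
        · rw [hBd]
          simp [if_neg h1, if_neg h2]
    have hsum : ∑ e, Bd v e * (x (vsrc e) - x (vtgt e)) ≤ 0 := by
      rw [← hLx x v, hx]
      simp only [Pi.sub_apply, Pi.single_apply, if_neg hvs]
      split <;> norm_num
    have hsum0 : ∑ e, Bd v e * (x (vsrc e) - x (vtgt e)) = 0 :=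
      le_antisymm hsum (Finset.sum_nonneg fun e _ => hterm e)
    intro e
    exact (Finset.sum_eq_zero_iff_of_nonneg (fun e _ => hterm e)).1 hsum0 e (Finset.mem_univ e)
  have hiff : ∀ e, (x v₀ ≤ x (vsrc e) ↔ x v₀ ≤ x (vtgt e)) := by
    intro e
    constructor
    · intro h
      have hk := key (vsrc e) h e
      have hB : Bd (vsrc e) e = 1 := by
        rw [hBd]; simp [hsimple e]
      rw [hB, one_mul, sub_eq_zero] at hk
      exact hk ▸ h
    · intro h
      have hk := key (vtgt e) h e
      have hB : Bd (vtgt e) e = -1 := by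
        rw [hBd]; simp [(hsimple e).symm]
      rw [hB, neg_mul, one_mul, neg_eq_zero, sub_eq_zero] at hk
      exact hk ▸ h
  set y : V → ℝ := fun v => if x v₀ ≤ x v then (1:ℝ) else 0 with hy
  have hLy : L *ᵥ y = 0 := by
    rw [hLdef, ← mulVec_mulVec]
    have : Bdᵀ *ᵥ y = 0 := by
      funext e
      rw [hBdT]
      simp only [hy, Pi.zero_apply]
      rw [if_congr (hiff e) rfl rfl]
      ring
    rw [this, mulVec_zero]
  obtain ⟨c, hc⟩ := hconn y hLy
  have h1 : y v₀ = 1 := by simp [hy]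
  have h0 : y s = 0 := by simp [hy, not_le.2 hMs]
  rw [hc] at h1 h0
  simp [Function.const] at h1 h0
  rw [h1] at h0
  norm_num at h0

/-- For any edge e of a connected unweighted graph, B_e² ≤ n. -/
theorem biharmonic_edge_upper_bound
    {V E : Type*} [Fintype V] [DecidableEq V] [Fintype E] [DecidableEq E]
    (vsrc vtgt : E → V) (hsimple : ∀ e, vsrc e ≠ vtgt e)
    (Bd : Matrix V E ℝ)
    (hBd : Bd = fun v e => (if v = vsrc e then (1:ℝ) else 0) - (if v = vtgt e then 1 else 0))
    (L : Matrix V V ℝ) (hLdef : L = Bd * Bdᵀ)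
    (hconn : ∀ x : V → ℝ, L *ᵥ x = 0 → ∃ c : ℝ, x = Function.const V c)
    (Lp : Matrix V V ℝ)
    (hp1 : L * Lp * L = L) (hp2 : Lp * L * Lp = Lp)
    (hp3 : (L * Lp)ᵀ = L * Lp) (hp4 : (Lp * L)ᵀ = Lp * L)
    (e0 : E) :
    (Pi.single (vsrc e0) 1 - Pi.single (vtgt e0) 1) ⬝ᵥ ((Lp * Lp) *ᵥ (Pi.single (vsrc e0) 1 - Pi.single (vtgt e0) 1)) ≤ (Fintype.card V : ℝ) := by
  have hst : vsrc e0 ≠ vtgt e0 := hsimple e0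
  have hne : Nonempty V := ⟨vsrc e0⟩
  set s := vsrc e0 with hs
  set t := vtgt e0 with ht
  set χ : V → ℝ := Pi.single s 1 - Pi.single t 1 with hχ
  -- basic matrix algebra
  have hLsym : Lᵀ = L := by rw [hLdef, transpose_mul, transpose_transpose]
  have h_i : Lpᵀ * L = L * Lp := by
    calc Lpᵀ * L = Lpᵀ * Lᵀ := by rw [hLsym]
      _ = (L * Lp)ᵀ := (transpose_mul L Lp).symm
      _ = L * Lp := hp3
  have h_ii : L * Lpᵀ = Lp * L := by
    calc L * Lpᵀ = Lᵀ * Lpᵀ := by rw [hLsym]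
      _ = (Lp * L)ᵀ := (transpose_mul Lp L).symm
      _ = Lp * L := hp4
  have hcomm : Lp * L = L * Lp := by
    calc Lp * L = L * Lpᵀ := h_ii.symm
      _ = (L * Lp * L) * Lpᵀ := by rw [hp1]
      _ = (L * Lp) * (L * Lpᵀ) := by simp only [mul_assoc]
      _ = (L * Lp) * (Lp * L) := by rw [h_ii]
      _ = Lpᵀ * L * (Lp * L) := by rw [h_i]
      _ = Lpᵀ * (L * Lp * L) := by simp only [mul_assoc]
      _ = Lpᵀ * L := by rw [hp1]
      _ = L * Lp := h_i
  have hLpsym : Lpᵀ = Lp := by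
    calc Lpᵀ = (Lp * L * Lp)ᵀ := by rw [hp2]
      _ = Lpᵀ * (Lp * L)ᵀ := by rw [transpose_mul]
      _ = Lpᵀ * (Lᵀ * Lpᵀ) := by rw [transpose_mul]
      _ = Lpᵀ * (L * Lpᵀ) := by rw [hLsym]
      _ = (Lpᵀ * L) * Lpᵀ := by simp only [mul_assoc]
      _ = (L * Lp) * Lpᵀ := by rw [h_i]
      _ = (Lp * L) * Lpᵀ := by rw [hcomm]
      _ = Lp * (L * Lpᵀ) := by simp only [mul_assoc]
      _ = Lp * (Lp * L) := by rw [h_ii]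
      _ = Lp * (L * Lp) := by rw [hcomm]
      _ = Lp * L * Lp := by simp only [mul_assoc]
      _ = Lp := hp2
  obtain ⟨x, hx⟩ : ∃ x : V → ℝ, x = Lp *ᵥ χ := ⟨_, rfl⟩
  -- incidence computations
  have hBdT : ∀ (y : V → ℝ) (e : E), (Bdᵀ *ᵥ y) e = y (vsrc e) - y (vtgt e) := by
    intro y e
    simp only [hBd, mulVec, dotProduct, Matrix.transpose, Matrix.of_apply, transpose_apply, sub_mul, ite_mul, one_mul, zero_mul,
      Finset.sum_sub_distrib, Finset.sum_ite_eq', Finset.mem_univ, if_pos]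
  have hL1 : L *ᵥ (fun _ => (1:ℝ)) = 0 := by
    rw [hLdef, ← mulVec_mulVec]
    have : Bdᵀ *ᵥ (fun _ => (1:ℝ)) = 0 := by
      funext e; rw [hBdT]; simp
    rw [this, mulVec_zero]
  have hsumχ : ∑ v, χ v = 0 := by
    simp [hχ, Pi.single_apply, Finset.sum_sub_distrib, hst]
  have hcard : (0:ℝ) < (Fintype.card V : ℝ) := by exact_mod_cast Fintype.card_pos
  -- L *ᵥ x = χ
  have hLLLp : L * (L * Lp) = L := by
    calc L * (L * Lp) = L * (Lp * L) := by rw [hcomm]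
      _ = L * Lp * L := by simp only [mul_assoc]
      _ = L := hp1
  have hproj : L *ᵥ x = χ := by
    have hLz : L *ᵥ (χ - (L * Lp) *ᵥ χ) = 0 := by
      rw [mulVec_sub, mulVec_mulVec, hLLLp, sub_self]
    obtain ⟨c, hc⟩ := hconn _ hLz
    have hsumLLp : ∑ v, ((L * Lp) *ᵥ χ) v = 0 := by
      have h1 : (fun _ => (1:ℝ)) ⬝ᵥ ((L * Lp) *ᵥ χ) = ((fun _ => (1:ℝ)) ᵥ* (L * Lp)) ⬝ᵥ χ :=
        dotProduct_mulVec ..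
      have h2 : (fun _ => (1:ℝ)) ᵥ* (L * Lp) = 0 := by
        rw [← vecMul_vecMul]
        have h3 : (fun _ => (1:ℝ)) ᵥ* L = 0 := by
          rw [← hLsym, ← mulVec_transpose, transpose_transpose, hL1]
        rw [h3, zero_vecMul]
      simp only [dotProduct, one_mul] at h1
      rw [h1, h2]
      simp
    have hsumz : ∑ v, (χ - (L * Lp) *ᵥ χ) v = 0 := by
      simp only [Pi.sub_apply, Finset.sum_sub_distrib, hsumχ, hsumLLp, sub_zero]
    rw [hc] at hsumz
    simp only [Function.const, Finset.sum_const, Finset.card_univ, nsmul_eq_mul] at hsumz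
    have hc0 : c = 0 := by
      rcases mul_eq_zero.1 hsumz with h | h
      · linarith
      · exact h
    have h0 : χ - (L * Lp) *ᵥ χ = 0 := by
      rw [hc, hc0]; funext v; rfl
    have hzz : (L * Lp) *ᵥ χ = χ := (sub_eq_zero.mp h0).symm
    rw [hx, mulVec_mulVec, hzz]
  -- sum of x is zero
  have hsumx : ∑ v, x v = 0 := by
    have h1 : (fun _ => (1:ℝ)) ⬝ᵥ x = ((fun _ => (1:ℝ)) ᵥ* Lp) ⬝ᵥ χ := by
      rw [hx]; exact dotProduct_mulVec ..
    have h2 : (fun _ => (1:ℝ)) ᵥ* Lp = ((fun _ => (1:ℝ)) ᵥ* (Lp * L)) ᵥ* Lp := by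
      rw [vecMul_vecMul, hp2]
    have h3 : (fun _ => (1:ℝ)) ᵥ* (Lp * L) = 0 := by
      rw [← mulVec_transpose, hp4, ← mulVec_mulVec, hL1, mulVec_zero]
    rw [h3, zero_vecMul] at h2
    rw [h2] at h1
    simp only [dotProduct, one_mul] at h1
    rw [h1]
    simp
  -- goal equals ∑ (x v)^2
  have hgoal : χ ⬝ᵥ ((Lp * Lp) *ᵥ χ) = x ⬝ᵥ x := by
    rw [← mulVec_mulVec, ← hx, dotProduct_mulVec, ← mulVec_transpose, hLpsym, ← hx]
  -- effective resistance bound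
  have hdot : χ ⬝ᵥ x = x s - x t := by
    simp only [hχ, dotProduct, Pi.sub_apply, Pi.single_apply, sub_mul, ite_mul, one_mul,
      zero_mul, Finset.sum_sub_distrib, Finset.sum_ite_eq', Finset.mem_univ, if_pos]
  have hRform : χ ⬝ᵥ x = ∑ e, (x (vsrc e) - x (vtgt e))^2 := by
    calc χ ⬝ᵥ x = (L *ᵥ x) ⬝ᵥ x := by rw [hproj]
      _ = x ⬝ᵥ (L *ᵥ x) := dotProduct_comm ..
      _ = (x ᵥ* Bd) ⬝ᵥ (Bdᵀ *ᵥ x) := by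
          rw [hLdef, ← mulVec_mulVec, dotProduct_mulVec]
      _ = (Bdᵀ *ᵥ x) ⬝ᵥ (Bdᵀ *ᵥ x) := by rw [mulVec_transpose]
      _ = ∑ e, (x (vsrc e) - x (vtgt e))^2 := by
          simp only [dotProduct, hBdT]
          exact Finset.sum_congr rfl fun e _ => (sq _).symm
  have hRnonneg : 0 ≤ χ ⬝ᵥ x := by
    rw [hRform]; positivity
  have hRge : (x s - x t)^2 ≤ χ ⬝ᵥ x := by
    rw [hRform]
    exact Finset.single_le_sum (f := fun e => (x (vsrc e) - x (vtgt e))^2)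
      (fun e _ => sq_nonneg _) (Finset.mem_univ e0)
  have hRle1 : x s - x t ≤ 1 := by
    rw [hdot] at hRge
    nlinarith [hRge]
  -- max and min principles
  have hmax : ∀ v, x v ≤ x s :=
    biharm_maxAux vsrc vtgt hsimple Bd hBd L hLdef hconn s t hst x hproj
  have hprojneg : L *ᵥ (-x) = Pi.single t 1 - Pi.single s 1 := by
    rw [mulVec_neg, hproj, hχ, neg_sub]
  have hmin' : ∀ v, -x v ≤ -x t :=
    biharm_maxAux vsrc vtgt hsimple Bd hBd L hLdef hconn t s hst.symm (-x) hprojneg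
  have hmin : ∀ v, x t ≤ x v := fun v => by
    have := hmin' v
    linarith
  -- x s ≥ 0, x t ≤ 0
  have hxs : 0 ≤ x s := by
    by_contra h
    push_neg at h
    have : ∑ v, x v < 0 := by
      calc ∑ v, x v ≤ ∑ _v : V, x s := Finset.sum_le_sum fun v _ => hmax v
        _ = (Fintype.card V : ℝ) * x s := by
            rw [Finset.sum_const, Finset.card_univ, nsmul_eq_mul]
        _ < 0 := mul_neg_of_pos_of_neg hcard h
    linarith [hsumx]
  have hxt : x t ≤ 0 := by
    by_contra h
    push_neg at h
    have : 0 < ∑ v, x v := by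
      calc (0:ℝ) < (Fintype.card V : ℝ) * x t := mul_pos hcard h
        _ = ∑ _v : V, x t := by rw [Finset.sum_const, Finset.card_univ, nsmul_eq_mul]
        _ ≤ ∑ v, x v := Finset.sum_le_sum fun v _ => hmin v
    linarith [hsumx]
  -- conclude
  rw [hgoal]
  calc x ⬝ᵥ x = ∑ v, x v * x v := rfl
    _ ≤ ∑ _v : V, (1:ℝ) := by
        refine Finset.sum_le_sum fun v _ => ?_
        nlinarith [hmax v, hmin v]
    _ = (Fintype.card V : ℝ) := by
        rw [Finset.sum_const, Finset.card_univ, nsmul_eq_mul, mul_one]
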